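/- Under the change of variables W = 1/(-ω + n ψ'/ψ), X = √n W ψ'/ψ, Y = √(n(n-1)) W/ψ, and new independent variable y with dy = dx/W, the soliton ODE system n ψ'' - ψ ω' = λψ, ψψ'' + (n-1)(ψ')² - (n-1) - ψψ'ω = λψ² transforms into the first-order system W' = W(X² - λW²), X' = X³ - X + Y²/√n + λ(√n - X)W², Y' = Y(X² - X/√n - λW²), where ' = d/dy. -/

import Mathlib

set_option maxHeartbeats 1000000


/-- **Change of variables for the soliton ODE.**  Suppose `ψ, ω` solve the soliton system
`n ψ'' - ψ ω' = λψ` and `ψψ'' + (n-1)(ψ')² - (n-1) - ψψ'ω = λψ²`, with `ψ > 0` and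
`-ω + n ψ'/ψ ≠ 0`.  Let `x(y)` be the reparametrization with `dx/dy = W(y)` where
`W = 1/(-ω + n ψ'/ψ)`, `X = √n W ψ'/ψ`, `Y = √(n(n-1)) W/ψ` (all evaluated at `x(y)`).
Then `(W, X, Y)` solves `W' = W(X² - λW²)`, `X' = X³ - X + Y²/√n + λ(√n - X)W²`,
`Y' = Y(X² - X/√n - λW²)` where `' = d/dy`. -/
theorem soliton_ode_change_of_variables
    (n : ℕ) (hn : 2 ≤ n) (lam : ℝ)
    (ψ ω : ℝ → ℝ) (x W X Y : ℝ → ℝ)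
    (hψsmooth : ContDiff ℝ 2 ψ) (hωsmooth : ContDiff ℝ 1 ω)
    (hψ : ∀ t, 0 < ψ t)
    (hden : ∀ t, -ω t + (n : ℝ) * (deriv ψ t / ψ t) ≠ 0)
    (hode1 : ∀ t, (n : ℝ) * deriv (deriv ψ) t - ψ t * deriv ω t = lam * ψ t)
    (hode2 : ∀ t, ψ t * deriv (deriv ψ) t + ((n : ℝ) - 1) * (deriv ψ t) ^ 2
        - ((n : ℝ) - 1) - ψ t * deriv ψ t * ω t = lam * (ψ t) ^ 2)
    (hW : ∀ y, W y = 1 / (-ω (x y) + (n : ℝ) * (deriv ψ (x y) / ψ (x y))))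
    (hX : ∀ y, X y = Real.sqrt n * W y * (deriv ψ (x y) / ψ (x y)))
    (hY : ∀ y, Y y = Real.sqrt ((n : ℝ) * ((n : ℝ) - 1)) * W y / ψ (x y))
    (hx : ∀ y, HasDerivAt x (W y) y) :
    ∀ y,
      HasDerivAt W (W y * ((X y) ^ 2 - lam * (W y) ^ 2)) y ∧
      HasDerivAt X ((X y) ^ 3 - X y + (Y y) ^ 2 / Real.sqrt n
          + lam * (Real.sqrt n - X y) * (W y) ^ 2) y ∧
      HasDerivAt Y (Y y * ((X y) ^ 2 - X y / Real.sqrt n - lam * (W y) ^ 2)) y := by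
  -- differentiability facts
  have hψd : Differentiable ℝ ψ := hψsmooth.differentiable (by norm_num)
  have h2 : ContDiff ℝ ((1:WithTop ℕ∞)+1) ψ := by norm_num at hψsmooth ⊢; exact hψsmooth
  have hψ'd : Differentiable ℝ (deriv ψ) :=
    (contDiff_succ_iff_deriv.mp h2).2.2.differentiable one_ne_zero
  have hωd : Differentiable ℝ ω := hωsmooth.differentiable one_ne_zero
  -- sqrt facts
  have hn0 : (0:ℝ) ≤ (n:ℝ) := by positivity
  have hn2 : (2:ℝ) ≤ (n:ℝ) := by exact_mod_cast hn
  have hsn : Real.sqrt n ^ 2 = (n:ℝ) := Real.sq_sqrt hn0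
  have hsn0 : Real.sqrt n ≠ 0 := by
    have : (0:ℝ) < n := by linarith
    positivity
  have hnn1 : (0:ℝ) ≤ (n:ℝ) * ((n:ℝ) - 1) := by nlinarith
  have hsm : Real.sqrt ((n:ℝ) * ((n:ℝ) - 1)) ^ 2 = (n:ℝ) * ((n:ℝ) - 1) :=
    Real.sq_sqrt hnn1
  -- the key algebraic identities (square-root free)
  have key : ∀ P Q S O O' : ℝ, S ≠ 0 → (-O + (n:ℝ) * (P / S)) ≠ 0 →
      (n:ℝ) * Q - S * O' = lam * S →
      S * Q + ((n:ℝ) - 1) * P ^ 2 - ((n:ℝ) - 1) - S * P * O = lam * S ^ 2 →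
      (-(-O' + (n:ℝ) * ((Q * S - P * P) / S ^ 2)) / (-O + (n:ℝ) * (P / S)) ^ 2)
          * (1 / (-O + (n:ℝ) * (P / S)))
        = (1 / (-O + (n:ℝ) * (P / S)))
          * ((n:ℝ) * ((1 / (-O + (n:ℝ) * (P / S))) * (P / S)) ^ 2
            - lam * (1 / (-O + (n:ℝ) * (P / S))) ^ 2) ∧
      ((-(-O' + (n:ℝ) * ((Q * S - P * P) / S ^ 2)) / (-O + (n:ℝ) * (P / S)) ^ 2) * (P / S)
          + (1 / (-O + (n:ℝ) * (P / S))) * ((Q * S - P * P) / S ^ 2))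
          * (1 / (-O + (n:ℝ) * (P / S)))
        = (n:ℝ) * ((1 / (-O + (n:ℝ) * (P / S))) * (P / S)) ^ 3
          - (1 / (-O + (n:ℝ) * (P / S))) * (P / S)
          + ((n:ℝ) - 1) * ((1 / (-O + (n:ℝ) * (P / S))) / S) ^ 2
          + lam * (1 / (-O + (n:ℝ) * (P / S))) ^ 2
          - lam * ((1 / (-O + (n:ℝ) * (P / S))) * (P / S))
            * (1 / (-O + (n:ℝ) * (P / S))) ^ 2 ∧
      ((-(-O' + (n:ℝ) * ((Q * S - P * P) / S ^ 2)) / (-O + (n:ℝ) * (P / S)) ^ 2) * S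
          - (1 / (-O + (n:ℝ) * (P / S))) * P) / S ^ 2 * (1 / (-O + (n:ℝ) * (P / S)))
        = ((1 / (-O + (n:ℝ) * (P / S))) / S)
          * ((n:ℝ) * ((1 / (-O + (n:ℝ) * (P / S))) * (P / S)) ^ 2
            - (1 / (-O + (n:ℝ) * (P / S))) * (P / S)
            - lam * (1 / (-O + (n:ℝ) * (P / S))) ^ 2) := by
    intro P Q S O O' hS0 hD0 e1 e2
    have hQs : Q = (lam * S ^ 2 + ((n:ℝ) - 1) - ((n:ℝ) - 1) * P ^ 2 + S * P * O) / S := by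
      field_simp; linarith
    have hO's : O' = ((n:ℝ) * Q - lam * S) / S := by
      field_simp; linarith
    have hnum : (n:ℝ) * P - O * S ≠ 0 := by
      intro h; apply hD0
      have : -O + (n:ℝ) * (P / S) = ((n:ℝ) * P - O * S) / S := by field_simp; ring
      rw [this, h, zero_div]
    have hDS : -O + (n:ℝ) * (P / S) = ((n:ℝ) * P - O * S) / S := by field_simp; ring
    rw [hO's, hQs, hDS]
    refine ⟨?_, ?_, ?_⟩ <;> (field_simp [hS0, hnum]; ring)
  intro y
  have hS0 : ψ (x y) ≠ 0 := (hψ (x y)).ne'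
  have hDψ : HasDerivAt ψ (deriv ψ (x y)) (x y) := (hψd (x y)).hasDerivAt
  have hDψ' : HasDerivAt (deriv ψ) (deriv (deriv ψ) (x y)) (x y) := (hψ'd (x y)).hasDerivAt
  have hDω : HasDerivAt ω (deriv ω (x y)) (x y) := (hωd (x y)).hasDerivAt
  obtain ⟨k1, k2, k3⟩ := key (deriv ψ (x y)) (deriv (deriv ψ) (x y)) (ψ (x y)) (ω (x y))
    (deriv ω (x y)) hS0 (hden (x y)) (hode1 (x y)) (hode2 (x y))
  set P := deriv ψ (x y) with hPdef
  set Q := deriv (deriv ψ) (x y) with hQdef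
  set S := ψ (x y) with hSdef
  set O := ω (x y) with hOdef
  set O' := deriv ω (x y) with hO'def
  have hp : HasDerivAt (fun s => deriv ψ s / ψ s) ((Q * S - P * P) / S ^ 2) (x y) :=
    hDψ'.div hDψ hS0
  have hDfun : HasDerivAt (fun s => -ω s + (n:ℝ) * (deriv ψ s / ψ s))
      (-O' + (n:ℝ) * ((Q * S - P * P) / S ^ 2)) (x y) := (hDω.neg).add (hp.const_mul _)
  have hwfun : HasDerivAt (fun s => 1 / (-ω s + (n:ℝ) * (deriv ψ s / ψ s)))
      (-(-O' + (n:ℝ) * ((Q * S - P * P) / S ^ 2)) / (-O + (n:ℝ) * (P / S)) ^ 2) (x y) := by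
    simp only [one_div]; exact hDfun.inv (hden (x y))
  have hWy : W y = 1 / (-O + (n:ℝ) * (P / S)) := hW y
  -- derivative of W
  have hWd : HasDerivAt W
      (-(-O' + (n:ℝ) * ((Q * S - P * P) / S ^ 2)) / (-O + (n:ℝ) * (P / S)) ^ 2 * W y) y :=
    (hwfun.comp y (hx y)).congr_of_eventuallyEq (Filter.Eventually.of_forall fun z => hW z)
  -- derivative of X
  have hufun : HasDerivAt
      (fun s => Real.sqrt n * ((1 / (-ω s + (n:ℝ) * (deriv ψ s / ψ s))) * (deriv ψ s / ψ s)))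
      (Real.sqrt n * (-(-O' + (n:ℝ) * ((Q * S - P * P) / S ^ 2)) / (-O + (n:ℝ) * (P / S)) ^ 2
        * (P / S) + (1 / (-O + (n:ℝ) * (P / S))) * ((Q * S - P * P) / S ^ 2))) (x y) :=
    (hwfun.mul hp).const_mul _
  have hXd : HasDerivAt X
      (Real.sqrt n * (-(-O' + (n:ℝ) * ((Q * S - P * P) / S ^ 2)) / (-O + (n:ℝ) * (P / S)) ^ 2
        * (P / S) + (1 / (-O + (n:ℝ) * (P / S))) * ((Q * S - P * P) / S ^ 2)) * W y) y := by
    refine (hufun.comp y (hx y)).congr_of_eventuallyEq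
      (Filter.Eventually.of_forall fun z => ?_)
    simp only [Function.comp_apply]
    rw [hX z, hW z]; ring
  -- derivative of Y
  have hvfun : HasDerivAt
      (fun s => Real.sqrt ((n:ℝ) * ((n:ℝ) - 1)) *
        (1 / (-ω s + (n:ℝ) * (deriv ψ s / ψ s))) / ψ s)
      ((Real.sqrt ((n:ℝ) * ((n:ℝ) - 1)) *
          (-(-O' + (n:ℝ) * ((Q * S - P * P) / S ^ 2)) / (-O + (n:ℝ) * (P / S)) ^ 2) * S
        - Real.sqrt ((n:ℝ) * ((n:ℝ) - 1)) * (1 / (-O + (n:ℝ) * (P / S))) * P) / S ^ 2) (x y) :=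
    (hwfun.const_mul _).div hDψ hS0
  have hYd : HasDerivAt Y
      ((Real.sqrt ((n:ℝ) * ((n:ℝ) - 1)) *
          (-(-O' + (n:ℝ) * ((Q * S - P * P) / S ^ 2)) / (-O + (n:ℝ) * (P / S)) ^ 2) * S
        - Real.sqrt ((n:ℝ) * ((n:ℝ) - 1)) * (1 / (-O + (n:ℝ) * (P / S))) * P) / S ^ 2 * W y) y := by
    refine (hvfun.comp y (hx y)).congr_of_eventuallyEq
      (Filter.Eventually.of_forall fun z => ?_)
    simp only [Function.comp_apply]
    rw [hY z, hW z]
  -- helper rewrites for targets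
  have hX2 : X y ^ 2 = (n:ℝ) * (W y * (P / S)) ^ 2 := by
    rw [hX y]; linear_combination (W y * (P / S)) ^ 2 * hsn
  have hX3 : X y ^ 3 = Real.sqrt n * ((n:ℝ) * (W y * (P / S)) ^ 3) := by
    rw [hX y]; linear_combination Real.sqrt n * (W y * (P / S)) ^ 3 * hsn
  have hY2q : Y y ^ 2 / Real.sqrt n = Real.sqrt n * (((n:ℝ) - 1) * (W y / S) ^ 2) := by
    rw [hY y, div_eq_iff hsn0]
    linear_combination (W y / S) ^ 2 * hsm - ((n:ℝ) - 1) * (W y / S) ^ 2 * hsn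
  refine ⟨?_, ?_, ?_⟩
  · refine hWd.congr_deriv ?_
    rw [hX2, hWy]; exact k1
  · refine hXd.congr_deriv ?_
    have hrhs : X y ^ 3 - X y + Y y ^ 2 / Real.sqrt n
        + lam * (Real.sqrt n - X y) * W y ^ 2
        = Real.sqrt n * ((n:ℝ) * (W y * (P / S)) ^ 3 - W y * (P / S)
          + ((n:ℝ) - 1) * (W y / S) ^ 2 + lam * W y ^ 2
          - lam * (W y * (P / S)) * W y ^ 2) := by
      rw [hX3, hY2q, hX y]; ring
    rw [hrhs, hWy]
    linear_combination Real.sqrt n * k2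
  · refine hYd.congr_deriv ?_
    have hXdiv : X y / Real.sqrt n = W y * (P / S) := by
      rw [hX y, div_eq_iff hsn0]; ring
    rw [hX2, hXdiv, hY y, hWy]
    linear_combination Real.sqrt ((n:ℝ) * ((n:ℝ) - 1)) * k3
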